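/- arXiv:2101.03971 — 5 statements merged into one kernel-verified Lean document; each statement's English description precedes it below -/
import Mathlib

section
/- The integral ∫₀^π f(θ₀) dθ₀ with f(θ₀) = (1/(2π²))·(1-σ²)/(1+σ²-2σcos(θ₀))² multiplied by the spherical volume factor 4π·sin²(θ₀) equals 1; that is, 4π ∫₀^π (1/(2π²))·(1-σ²)·sin²(θ₀)/(1+σ²-2σcos(θ₀))² dθ₀ = 1 for all σ ∈ [0,1). -/
set_option maxHeartbeats 1600000

open Real

lemma alg_identity (σ c s : ℝ) (hσ : σ ≠ 0) (hs2 : 1 - σ^2 ≠ 0) (hc : 1 - σ*c ≠ 0)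
    (hd : 1 + σ^2 - 2*σ*c ≠ 0) (hs : s^2 = 1 - c^2) :
    s ^ 2 / (1 + σ^2 - 2*σ*c)^2 =
      1/(2*(1-σ^2)) + (1+σ^2)/(2*σ^2*(1-σ^2)) *
        (1/(1+(σ*s/(1-σ*c))^2) * ((σ*c*(1-σ*c) - σ*s*(σ*s))/(1-σ*c)^2))
      - (c*(2*σ*(1+σ^2-2*σ*c)) - s*(2*σ*(2*σ*s)))/(2*σ*(1+σ^2-2*σ*c))^2 := by
  have e0 : (σ*s/(1-σ*c))^2 = σ^2*s^2/(1-σ*c)^2 := by rw [div_pow, mul_pow]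
  have e1 : σ*s*(σ*s) = σ^2*s^2 := by ring
  have e2 : s*(2*σ*(2*σ*s)) = 4*σ^2*s^2 := by ring
  rw [e0, e1, e2, hs]
  have key : 1 + σ^2*(1-c^2)/(1-σ*c)^2 = (1+σ^2-2*σ*c)/(1-σ*c)^2 := by
    field_simp; ring
  rw [key, one_div_div]
  have hq : (1 - σ*c)^2 ≠ 0 := pow_ne_zero 2 hc
  rw [show (1 - σ*c)^2 / (1 + σ^2 - 2*σ*c) * ((σ*c*(1-σ*c) - σ^2*(1-c^2))/(1-σ*c)^2)
      = (σ*c*(1-σ*c) - σ^2*(1-c^2)) / (1 + σ^2 - 2*σ*c) by field_simp]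
  have ha : 2*(1-σ^2) ≠ 0 := mul_ne_zero two_ne_zero hs2
  have hb : 2*σ^2*(1-σ^2)*(1 + σ^2 - 2*σ*c) ≠ 0 :=
    mul_ne_zero (mul_ne_zero (mul_ne_zero two_ne_zero (pow_ne_zero 2 hσ)) hs2) hd
  have he : (2*σ*(1 + σ^2 - 2*σ*c))^2 ≠ 0 := pow_ne_zero 2 (mul_ne_zero (mul_ne_zero two_ne_zero hσ) hd)
  rw [div_mul_div_comm, div_add_div _ _ ha hb,
    div_sub_div _ _ (mul_ne_zero ha hb) he, div_eq_div_iff (pow_ne_zero 2 hd) (mul_ne_zero (mul_ne_zero ha hb) he)]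
  ring


lemma aux_integral (σ : ℝ) (h0 : 0 ≤ σ) (h1 : σ < 1) :
    ∫ θ in (0:ℝ)..π, Real.sin θ ^ 2 / (1 + σ ^ 2 - 2 * σ * Real.cos θ) ^ 2
      = π / (2 * (1 - σ ^ 2)) := by
  have hD : ∀ θ : ℝ, 0 < 1 + σ ^ 2 - 2 * σ * Real.cos θ := by
    intro θ
    nlinarith [Real.cos_le_one θ, Real.neg_one_le_cos θ, sq_nonneg (1 - σ)]
  have hC : ∀ θ : ℝ, 0 < 1 - σ * Real.cos θ := by
    intro θ
    nlinarith [Real.cos_le_one θ, Real.neg_one_le_cos θ]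
  have hs2 : (0:ℝ) < 1 - σ ^ 2 := by nlinarith
  rcases eq_or_lt_of_le h0 with h0' | h0'
  · subst h0'
    norm_num [integral_sin_sq]
  · set F : ℝ → ℝ := fun θ => θ / (2 * (1 - σ ^ 2))
      + ((1 + σ ^ 2) / (2 * σ ^ 2 * (1 - σ ^ 2)))
          * Real.arctan (σ * Real.sin θ / (1 - σ * Real.cos θ))
      - Real.sin θ / (2 * σ * (1 + σ ^ 2 - 2 * σ * Real.cos θ)) with hF
    have key : ∀ θ ∈ Set.uIcc (0:ℝ) π,
        HasDerivAt F (Real.sin θ ^ 2 / (1 + σ ^ 2 - 2 * σ * Real.cos θ) ^ 2) θ := by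
      intro θ _
      have hCne : (1 - σ * Real.cos θ) ≠ 0 := (hC θ).ne'
      have hDne : (2 * σ * (1 + σ ^ 2 - 2 * σ * Real.cos θ)) ≠ 0 :=
        (mul_pos (by linarith : (0:ℝ) < 2 * σ) (hD θ)).ne'
      have d1 : HasDerivAt (fun x : ℝ => x / (2 * (1 - σ ^ 2))) (1 / (2 * (1 - σ ^ 2))) θ :=
        (hasDerivAt_id θ).div_const (2 * (1 - σ ^ 2))
      have du : HasDerivAt (fun x : ℝ => σ * Real.sin x / (1 - σ * Real.cos x))
          ((σ * Real.cos θ * (1 - σ * Real.cos θ) - σ * Real.sin θ * (σ * Real.sin θ))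
            / (1 - σ * Real.cos θ) ^ 2) θ := by
        exact ((Real.hasDerivAt_sin θ).const_mul σ).div
          (((Real.hasDerivAt_cos θ).const_mul σ).const_sub 1 |>.congr_deriv (by ring)) hCne
      have d2 : HasDerivAt (fun x : ℝ => ((1 + σ ^ 2) / (2 * σ ^ 2 * (1 - σ ^ 2)))
          * Real.arctan (σ * Real.sin x / (1 - σ * Real.cos x)))
          (((1 + σ ^ 2) / (2 * σ ^ 2 * (1 - σ ^ 2))) *
            (1 / (1 + (σ * Real.sin θ / (1 - σ * Real.cos θ)) ^ 2) *
              ((σ * Real.cos θ * (1 - σ * Real.cos θ) - σ * Real.sin θ * (σ * Real.sin θ))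
                / (1 - σ * Real.cos θ) ^ 2))) θ :=
        (du.arctan).const_mul _
      have d3 : HasDerivAt (fun x : ℝ => Real.sin x / (2 * σ * (1 + σ ^ 2 - 2 * σ * Real.cos x)))
          ((Real.cos θ * (2 * σ * (1 + σ ^ 2 - 2 * σ * Real.cos θ))
              - Real.sin θ * (2 * σ * (2 * σ * Real.sin θ)))
            / (2 * σ * (1 + σ ^ 2 - 2 * σ * Real.cos θ)) ^ 2) θ := by
        have hden : HasDerivAt (fun x : ℝ => 2 * σ * (1 + σ ^ 2 - 2 * σ * Real.cos x))
            (2 * σ * (2 * σ * Real.sin θ)) θ := by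
          have : HasDerivAt (fun x : ℝ => 1 + σ ^ 2 - 2 * σ * Real.cos x)
              (2 * σ * Real.sin θ) θ := by
            simpa using (((Real.hasDerivAt_cos θ).const_mul (2 * σ)).const_sub (1 + σ ^ 2))
          exact this.const_mul (2 * σ) |>.congr_deriv rfl
        exact (Real.hasDerivAt_sin θ).div hden hDne
      exact ((d1.add d2).sub d3).congr_deriv
        (alg_identity σ (Real.cos θ) (Real.sin θ) h0'.ne' hs2.ne' hCne (hD θ).ne'
          (Real.sin_sq θ)).symm
    have hcont : IntervalIntegrable
        (fun θ => Real.sin θ ^ 2 / (1 + σ ^ 2 - 2 * σ * Real.cos θ) ^ 2)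
        MeasureTheory.volume 0 π := by
      apply Continuous.intervalIntegrable
      exact Continuous.div (by continuity) (by continuity)
        (fun θ => pow_ne_zero 2 (hD θ).ne')
    rw [intervalIntegral.integral_eq_sub_of_hasDerivAt key hcont]
    simp [hF, Real.sin_pi, Real.sin_zero, Real.cos_pi, Real.cos_zero, Real.arctan_zero]

theorem normal_density_integrates_to_one (σ : ℝ) (hσ : σ ∈ Set.Ico (0:ℝ) 1) :
    4 * π * ∫ θ₀ in (0:ℝ)..π,
        (1 / (2 * π ^ 2)) * (1 - σ ^ 2) * Real.sin θ₀ ^ 2 /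
          (1 + σ ^ 2 - 2 * σ * Real.cos θ₀) ^ 2 = 1 := by
  obtain ⟨h0, h1⟩ := hσ
  have hs2 : (0:ℝ) < 1 - σ ^ 2 := by nlinarith
  have hπ := Real.pi_pos
  have : (fun θ₀ => (1 / (2 * π ^ 2)) * (1 - σ ^ 2) * Real.sin θ₀ ^ 2 /
          (1 + σ ^ 2 - 2 * σ * Real.cos θ₀) ^ 2)
      = fun θ₀ => (1 / (2 * π ^ 2)) * (1 - σ ^ 2) *
          (Real.sin θ₀ ^ 2 / (1 + σ ^ 2 - 2 * σ * Real.cos θ₀) ^ 2) := by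
    funext θ₀; ring
  rw [this, intervalIntegral.integral_const_mul, aux_integral σ h0 h1]
  field_simp
  ring
end

section
/- For all σ ∈ [0,1): ∫₀^π cos(θ₀)·sin²(θ₀)/(1+σ²-2σcos(θ₀))² dθ₀ = (π/2)·σ/(1-σ²). -/
open Real

theorem integral_cos_sin_sq_over_kernel (σ : ℝ) (hσ : σ ∈ Set.Ico (0:ℝ) 1) :
    ∫ θ₀ in (0:ℝ)..π,
        Real.cos θ₀ * Real.sin θ₀ ^ 2 / (1 + σ ^ 2 - 2 * σ * Real.cos θ₀) ^ 2 =
      (π / 2) * (σ / (1 - σ ^ 2)) := by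
  obtain ⟨hσ0, hσ1⟩ := hσ
  have hD : ∀ θ : ℝ, 0 < 1 + σ ^ 2 - 2 * σ * Real.cos θ := by
    intro θ
    nlinarith [Real.cos_le_one θ, Real.neg_one_le_cos θ, sq_nonneg (1 - σ)]
  have hcont : IntervalIntegrable
      (fun θ₀ => Real.cos θ₀ * Real.sin θ₀ ^ 2 / (1 + σ ^ 2 - 2 * σ * Real.cos θ₀) ^ 2)
      MeasureTheory.volume 0 π := by
    apply Continuous.intervalIntegrable
    apply Continuous.div (by continuity) (by continuity)
    intro x
    exact pow_ne_zero 2 (hD x).ne'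
  rcases eq_or_lt_of_le hσ0 with h0 | h0
  · -- σ = 0
    subst h0
    simp only [ne_eq, OfNat.ofNat_ne_zero, not_false_eq_true, zero_pow, add_zero, mul_zero,
      zero_mul, sub_zero, one_pow, div_one, zero_div, mul_zero]
    have : ∀ x ∈ Set.uIcc (0:ℝ) π,
        HasDerivAt (fun t => Real.sin t ^ 3 / 3) (Real.cos x * Real.sin x ^ 2) x := by
      intro x _
      have := ((Real.hasDerivAt_sin x).pow 3).div_const 3
      refine this.congr_deriv ?_
      ring
    rw [intervalIntegral.integral_eq_sub_of_hasDerivAt this (by simpa using hcont)]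
    simp
  · -- σ > 0
    have hσ2 : (0:ℝ) < 1 - σ ^ 2 := by nlinarith
    have hM : ∀ θ : ℝ, 0 < 1 - σ * Real.cos θ := by
      intro θ
      nlinarith [Real.cos_le_one θ, Real.neg_one_le_cos θ]
    set a := σ / (2 * (1 - σ ^ 2)) with ha
    set b := (1 + σ ^ 4) / (2 * σ ^ 3 * (1 - σ ^ 2)) with hb
    set c₀ := -(1 + σ ^ 2) / (2 * σ ^ 2) with hc₀
    set d₀ := 1 / (2 * σ) with hd₀
    set F := fun θ : ℝ => a * θ +
        b * Real.arctan (σ * Real.sin θ / (1 - σ * Real.cos θ)) +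
        Real.sin θ * (c₀ + d₀ * Real.cos θ) / (1 + σ ^ 2 - 2 * σ * Real.cos θ) with hF
    have key : ∀ θ ∈ Set.uIcc (0:ℝ) π, HasDerivAt F
        (Real.cos θ * Real.sin θ ^ 2 / (1 + σ ^ 2 - 2 * σ * Real.cos θ) ^ 2) θ := by
      intro θ _
      have hMθ := hM θ
      have hDθ := hD θ
      -- arctan part
      have hg : HasDerivAt (fun x => σ * Real.sin x / (1 - σ * Real.cos x))
          ((σ * Real.cos θ - σ ^ 2) / (1 - σ * Real.cos θ) ^ 2) θ := by
        have := HasDerivAt.div ((Real.hasDerivAt_sin θ).const_mul σ)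
          (((Real.hasDerivAt_cos θ).const_mul σ).const_sub 1) hMθ.ne'
        refine this.congr_deriv ?_
        have hs : Real.sin θ ^ 2 = 1 - Real.cos θ ^ 2 := Real.sin_sq θ
        field_simp
        linear_combination (-σ) * hs
      have hA : HasDerivAt (fun x => Real.arctan (σ * Real.sin x / (1 - σ * Real.cos x)))
          ((σ * Real.cos θ - σ ^ 2) / (1 + σ ^ 2 - 2 * σ * Real.cos θ)) θ := by
        have := hg.arctan
        refine this.congr_deriv ?_
        have hs : Real.sin θ ^ 2 = 1 - Real.cos θ ^ 2 := Real.sin_sq θ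
        have h1 : 1 + (σ * Real.sin θ / (1 - σ * Real.cos θ)) ^ 2
            = (1 + σ ^ 2 - 2 * σ * Real.cos θ) / (1 - σ * Real.cos θ) ^ 2 := by
          field_simp
          linear_combination σ^2 * hs
        rw [h1]
        field_simp
      -- rational part
      have hR : HasDerivAt (fun x => Real.sin x * (c₀ + d₀ * Real.cos x) /
            (1 + σ ^ 2 - 2 * σ * Real.cos x))
          (((Real.cos θ * (c₀ + d₀ * Real.cos θ) - d₀ * (1 - Real.cos θ ^ 2)) *
              (1 + σ ^ 2 - 2 * σ * Real.cos θ) -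
            (1 - Real.cos θ ^ 2) * (c₀ + d₀ * Real.cos θ) * (2 * σ)) /
            (1 + σ ^ 2 - 2 * σ * Real.cos θ) ^ 2) θ := by
        have hnum : HasDerivAt (fun x => Real.sin x * (c₀ + d₀ * Real.cos x))
            (Real.cos θ * (c₀ + d₀ * Real.cos θ) + Real.sin θ * (d₀ * -Real.sin θ)) θ :=
          (Real.hasDerivAt_sin θ).mul (((Real.hasDerivAt_cos θ).const_mul d₀).const_add c₀)
        have hden : HasDerivAt (fun x => 1 + σ ^ 2 - 2 * σ * Real.cos x)
            (2 * σ * Real.sin θ) θ := by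
          have := ((Real.hasDerivAt_cos θ).const_mul (2 * σ)).const_sub (1 + σ ^ 2)
          refine this.congr_deriv ?_
          ring
        have := hnum.div hden hDθ.ne'
        refine this.congr_deriv ?_
        have hs : Real.sin θ ^ 2 = 1 - Real.cos θ ^ 2 := Real.sin_sq θ
        have hσ' : σ ≠ 0 := h0.ne'
        rw [hc₀, hd₀]
        congr 1
        linear_combination ((1/(2*σ)) * (1 + σ ^ 2 - 2 * σ * Real.cos θ) + 2*σ*(-(1 + σ ^ 2) / (2 * σ ^ 2) + 1/(2*σ) * Real.cos θ) - (σ⁻¹ + σ^2*σ⁻¹ - 2*σ*σ⁻¹^2 - 2*σ^3*σ⁻¹^2)) * hs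
      have hsum := (((hasDerivAt_id θ).const_mul a).add (hA.const_mul b)).add hR
      refine hsum.congr_deriv ?_
      have hs : Real.sin θ ^ 2 = 1 - Real.cos θ ^ 2 := Real.sin_sq θ
      rw [hs, ha, hb, hc₀, hd₀]
      have hσ' : σ ≠ 0 := h0.ne'
      generalize hDg : 1 + σ ^ 2 - 2 * σ * Real.cos θ = D at hDθ ⊢
      have hD0 : D ≠ 0 := hDθ.ne'
      field_simp
      subst hDg
      ring
    rw [intervalIntegral.integral_eq_sub_of_hasDerivAt key hcont]
    have h1 : Real.sin π = 0 := Real.sin_pi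
    have h2 : Real.sin 0 = 0 := Real.sin_zero
    simp only [hF, h1, h2, Real.cos_pi, Real.cos_zero, mul_zero, zero_mul, zero_div, add_zero,
      mul_one, Real.arctan_zero, mul_zero]
    rw [ha]
    field_simp
    ring
end

section
/- For all σ ∈ [0,1): ∫₀^π cos²(θ₀)·sin²(θ₀)/(1+σ²-2σcos(θ₀))² dθ₀ · (1-σ²) = (π/8)·(1+3σ²) ... i.e. ∫₀^π cos²(θ₀)sin²(θ₀)/(1+σ²-2σcos(θ₀))² dθ₀ = (π/8)·(1+3σ²)/(1-σ²). -/
open Real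

set_option maxHeartbeats 1000000 in
theorem integral_cos_sq_sin_sq_over_kernel (σ : ℝ) (hσ : σ ∈ Set.Ico (0:ℝ) 1) :
    ∫ θ₀ in (0:ℝ)..π,
        Real.cos θ₀ ^ 2 * Real.sin θ₀ ^ 2 / (1 + σ ^ 2 - 2 * σ * Real.cos θ₀) ^ 2 =
      (π / 8) * ((1 + 3 * σ ^ 2) / (1 - σ ^ 2)) := by
  obtain ⟨h0, h1⟩ := hσ
  rcases h0.eq_or_lt with h | hpos
  · -- σ = 0
    rw [← h]
    have hi : ∀ x : ℝ, Real.cos x ^ 2 * Real.sin x ^ 2 / (1 + (0:ℝ) ^ 2 - 2 * 0 * Real.cos x) ^ 2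
        = Real.sin x ^ 2 * Real.cos x ^ 2 := fun x => by norm_num; ring
    simp_rw [hi]
    rw [integral_sin_sq_mul_cos_sq]
    have h4 : Real.sin (4 * π) = 0 := by
      simpa using Real.sin_int_mul_pi 4
    rw [h4]
    norm_num
  · -- 0 < σ < 1
    have hD : ∀ x : ℝ, (0:ℝ) < 1 + σ ^ 2 - 2 * σ * Real.cos x := fun x => by
      nlinarith [Real.cos_le_one x, sq_nonneg (1 - σ)]
    have hden2 : ∀ x : ℝ, (0:ℝ) < 1 - σ * Real.cos x := fun x => by
      nlinarith [Real.cos_le_one x]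
    set F : ℝ → ℝ := fun x =>
      (1 + 3*σ^2) / (8*(1 - σ^2)) * x
      + (1+σ^2)*(3 - 2*σ^2 + 3*σ^4) / (8*σ^4*(1-σ^2)) *
          Real.arctan (σ * Real.sin x / (1 - σ * Real.cos x))
      - (1+σ^2)^2 / (8*σ^3) * (Real.sin x / (1 + σ^2 - 2*σ*Real.cos x))
      - (1+σ^2) / (4*σ^3) * Real.sin x
      - 1/(8*σ^2) * (Real.sin x * Real.cos x) with hF
    have hσ0 : σ ≠ 0 := hpos.ne'
    have hv : (1:ℝ) - σ^2 ≠ 0 := by nlinarith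
    have hderiv : ∀ x ∈ Set.uIcc (0:ℝ) π, HasDerivAt F
        (Real.cos x ^ 2 * Real.sin x ^ 2 / (1 + σ ^ 2 - 2 * σ * Real.cos x) ^ 2) x := by
      intro x _
      have hs2 : Real.sin x ^ 2 = 1 - Real.cos x ^ 2 := by
        have := Real.sin_sq_add_cos_sq x; linarith
      have hT : HasDerivAt (fun x => Real.arctan (σ * Real.sin x / (1 - σ * Real.cos x)))
          (σ * (Real.cos x - σ) / (1 + σ ^ 2 - 2 * σ * Real.cos x)) x := by
        have hq : HasDerivAt (fun x => σ * Real.sin x / (1 - σ * Real.cos x))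
            ((σ * Real.cos x * (1 - σ * Real.cos x) - σ * Real.sin x * (-(σ * -Real.sin x))) /
              (1 - σ * Real.cos x) ^ 2) x :=
          (((Real.hasDerivAt_sin x).const_mul σ).div
            (((Real.hasDerivAt_cos x).const_mul σ).const_sub 1) (hden2 x).ne')
        have hd2 : (1 - σ * Real.cos x) ≠ 0 := (hden2 x).ne'
        have hDne : (1 + σ ^ 2 - 2 * σ * Real.cos x) ≠ 0 := (hD x).ne'
        convert hq.arctan using 1
        field_simp
        rw [div_eq_iff (by nlinarith [hD x])]
        rw [hs2]
        ring
      have hQ : HasDerivAt (fun x => Real.sin x / (1 + σ^2 - 2*σ*Real.cos x))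
          ((Real.cos x * (1 + σ^2 - 2*σ*Real.cos x) - Real.sin x * (-(2*σ * -Real.sin x))) /
            (1 + σ^2 - 2*σ*Real.cos x) ^ 2) x :=
        (Real.hasDerivAt_sin x).div
          (((Real.hasDerivAt_cos x).const_mul (2*σ)).const_sub (1 + σ^2)) (hD x).ne'
      have hSC : HasDerivAt (fun x => Real.sin x * Real.cos x)
          (Real.cos x * Real.cos x + Real.sin x * -Real.sin x) x :=
        (Real.hasDerivAt_sin x).mul (Real.hasDerivAt_cos x)
      have hId : HasDerivAt (fun x : ℝ => x) 1 x := hasDerivAt_id x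
      have H := ((((hId.const_mul ((1 + 3*σ^2) / (8*(1 - σ^2)))).add
          (hT.const_mul ((1+σ^2)*(3 - 2*σ^2 + 3*σ^4) / (8*σ^4*(1-σ^2))))).sub
          (hQ.const_mul ((1+σ^2)^2 / (8*σ^3)))).sub
          ((Real.hasDerivAt_sin x).const_mul ((1+σ^2) / (4*σ^3)))).sub
          (hSC.const_mul (1/(8*σ^2)))
      refine H.congr_deriv ?_
      have hDne := (hD x).ne'
      have hDne' : 1 + σ ^ 2 - σ * 2 * Real.cos x ≠ 0 := ne_of_gt (by linarith [hD x])
      field_simp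
      ring_nf
      rw [hs2]
      ring
    have hcont : Continuous fun x : ℝ =>
        Real.cos x ^ 2 * Real.sin x ^ 2 / (1 + σ ^ 2 - 2 * σ * Real.cos x) ^ 2 := by
      apply Continuous.div (by fun_prop) (by fun_prop)
      exact fun x => pow_ne_zero 2 (hD x).ne'
    rw [intervalIntegral.integral_eq_sub_of_hasDerivAt hderiv (hcont.intervalIntegrable _ _)]
    simp only [hF, Real.sin_pi, Real.sin_zero, Real.cos_zero, Real.cos_pi]
    rw [show σ * 0 / (1 - σ * (-1)) = 0 by ring, show σ * 0 / (1 - σ * 1) = 0 by ring,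
      Real.arctan_zero]
    field_simp
    ring
end

section
/- The variance of a one-qubit quantum error with density f(θ₀) on the 3-sphere, acting on one qubit of an n-qubit state, is V = 2 - 8π ∫₀^π f(θ₀)cos(θ₀)sin²(θ₀) dθ₀, independent of the initial n-qubit state. -/
open Real Complex

/-- The one-qubit error operator `W` of the paper. -/
noncomputable def Wmat (θ₀ θ₁ θ₂ : ℝ) : Matrix (Fin 2) (Fin 2) ℂ :=
  !![(Real.cos θ₀ : ℂ) + Complex.I * (Real.sin θ₀ * Real.cos θ₁ : ℝ),
     (-(Real.sin θ₀ * Real.sin θ₁ * Real.cos θ₂) : ℝ) +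
       Complex.I * (Real.sin θ₀ * Real.sin θ₁ * Real.sin θ₂ : ℝ);
     ((Real.sin θ₀ * Real.sin θ₁ * Real.cos θ₂) : ℝ) +
       Complex.I * (Real.sin θ₀ * Real.sin θ₁ * Real.sin θ₂ : ℝ),
     (Real.cos θ₀ : ℂ) - Complex.I * (Real.sin θ₀ * Real.cos θ₁ : ℝ)]

/-- The operator `𝒲 = W ⊗ I^{⊗(n-1)}` acting on the qubit `0` of an `n`-qubit state,
realized as a matrix indexed by `Fin n → Fin 2`. -/
noncomputable def Wone (n : ℕ) (hn : 0 < n) (θ₀ θ₁ θ₂ : ℝ) :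
    Matrix (Fin n → Fin 2) (Fin n → Fin 2) ℂ :=
  fun j k =>
    Wmat θ₀ θ₁ θ₂ (j ⟨0, hn⟩) (k ⟨0, hn⟩) *
      (if ∀ u : Fin n, u ≠ ⟨0, hn⟩ → j u = k u then 1 else 0)

/-- The key algebraic identity for a single pair of amplitudes: for a unit-quaternion
`SU(2)` matrix, the cross terms cancel. -/
lemma pair_id (c p q r : ℝ) (h : c^2 + p^2 + q^2 + r^2 = 1) (x y : ℂ) :
    Complex.normSq (((c:ℂ) + Complex.I * (p:ℝ)) * x + (((-q : ℝ):ℂ) + Complex.I * (r:ℝ)) * y - x)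
      + Complex.normSq ((((q:ℝ):ℂ) + Complex.I*(r:ℝ)) * x + ((c:ℂ) - Complex.I*(p:ℝ)) * y - y)
    = (2 - 2*c) * (Complex.normSq x + Complex.normSq y) := by
  simp only [Complex.normSq_apply, Complex.add_re, Complex.add_im, Complex.sub_re, Complex.sub_im,
    Complex.mul_re, Complex.mul_im, Complex.I_re, Complex.I_im, Complex.ofReal_re,
    Complex.ofReal_im]
  linear_combination (x.re^2 + x.im^2 + y.re^2 + y.im^2) * h

/-- The disturbance of a unit state by the one-qubit error depends only on `θ₀`. -/
lemma key_norm (n : ℕ) (hn : 0 < n) (θ₀ θ₁ θ₂ : ℝ)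
    (Φ : EuclideanSpace ℂ (Fin n → Fin 2)) (hΦ : ‖Φ‖ = 1) :
    ‖Matrix.toEuclideanLin (Wone n hn θ₀ θ₁ θ₂) Φ - Φ‖ ^ 2 = 2 - 2 * Real.cos θ₀ := by
  classical
  set i : Fin n := ⟨0, hn⟩ with hi
  set e := Equiv.funSplitAt i (Fin 2) with he
  have norm_sq : ∀ v : EuclideanSpace ℂ (Fin n → Fin 2),
      ‖v‖ ^ 2 = ∑ j, Complex.normSq (v j) := by
    intro v
    rw [EuclideanSpace.norm_eq, Real.sq_sqrt (Finset.sum_nonneg fun _ _ => sq_nonneg _)]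
    simp [Complex.sq_norm]
  have hsymm_i : ∀ (b : Fin 2) g, e.symm (b, g) i = b := by
    intro b g; simp [he, Equiv.funSplitAt]
  have hsymm_ne : ∀ (b : Fin 2) g (u : Fin n) (hu : u ≠ i), e.symm (b, g) u = g ⟨u, hu⟩ := by
    intro b g u hu; simp [he, Equiv.funSplitAt, hu]
  have hW : ∀ (b b' : Fin 2) g g',
      Wone n hn θ₀ θ₁ θ₂ (e.symm (b, g)) (e.symm (b', g')) =
        Wmat θ₀ θ₁ θ₂ b b' * (if g' = g then 1 else 0) := by
    intro b b' g g'
    unfold Wone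
    rw [show ((⟨0, hn⟩ : Fin n)) = i from rfl, hsymm_i, hsymm_i]
    congr 1
    have hcond : (∀ u : Fin n, u ≠ i → e.symm (b, g) u = e.symm (b', g') u) ↔ g' = g := by
      constructor
      · intro h; funext u
        have := h u.1 u.2
        rw [hsymm_ne b g u.1 u.2, hsymm_ne b' g' u.1 u.2] at this
        simpa using this.symm
      · rintro rfl u hu; rw [hsymm_ne b g' u hu, hsymm_ne b' g' u hu]
    simp [hcond]
  have hmv : ∀ (b : Fin 2) g,
      (Matrix.toEuclideanLin (Wone n hn θ₀ θ₁ θ₂) Φ) (e.symm (b, g)) =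
        Wmat θ₀ θ₁ θ₂ b 0 * Φ (e.symm (0, g)) + Wmat θ₀ θ₁ θ₂ b 1 * Φ (e.symm (1, g)) := by
    intro b g
    have : (Matrix.toEuclideanLin (Wone n hn θ₀ θ₁ θ₂) Φ) (e.symm (b, g)) =
        ∑ k, Wone n hn θ₀ θ₁ θ₂ (e.symm (b, g)) k * Φ k := rfl
    rw [this, ← Equiv.sum_comp e.symm
      (fun k => Wone n hn θ₀ θ₁ θ₂ (e.symm (b, g)) k * Φ k), Fintype.sum_prod_type,
      Fin.sum_univ_two]
    have h0 : ∀ b' : Fin 2, ∑ g', Wone n hn θ₀ θ₁ θ₂ (e.symm (b, g)) (e.symm (b', g')) *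
        Φ (e.symm (b', g')) = Wmat θ₀ θ₁ θ₂ b b' * Φ (e.symm (b', g)) := by
      intro b'
      simp only [hW]
      simp [ite_mul, mul_ite, Finset.sum_ite_eq, mul_assoc]
    rw [h0 0, h0 1]
  have hΦsum : ∑ g, (Complex.normSq (Φ (e.symm (0, g))) + Complex.normSq (Φ (e.symm (1, g)))) = 1 := by
    have h1 : ‖Φ‖ ^ 2 = 1 := by rw [hΦ]; norm_num
    rw [norm_sq Φ, ← Equiv.sum_comp e.symm (fun j => Complex.normSq (Φ j)),
      Fintype.sum_prod_type, Fin.sum_univ_two, ← Finset.sum_add_distrib] at h1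
    exact h1
  rw [norm_sq, ← Equiv.sum_comp e.symm
    (fun j => Complex.normSq ((Matrix.toEuclideanLin (Wone n hn θ₀ θ₁ θ₂) Φ - Φ) j)),
    Fintype.sum_prod_type, Fin.sum_univ_two, ← Finset.sum_add_distrib]
  have hsub : ∀ j, (Matrix.toEuclideanLin (Wone n hn θ₀ θ₁ θ₂) Φ - Φ) j =
      (Matrix.toEuclideanLin (Wone n hn θ₀ θ₁ θ₂) Φ) j - Φ j := fun _ => rfl
  have htrig : (Real.cos θ₀)^2 + (Real.sin θ₀ * Real.cos θ₁)^2 +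
      (Real.sin θ₀ * Real.sin θ₁ * Real.cos θ₂)^2 +
      (Real.sin θ₀ * Real.sin θ₁ * Real.sin θ₂)^2 = 1 := by
    have h0 := Real.sin_sq_add_cos_sq θ₀
    have h1 := Real.sin_sq_add_cos_sq θ₁
    have h2 := Real.sin_sq_add_cos_sq θ₂
    linear_combination h0 + (Real.sin θ₀)^2 * h1 + (Real.sin θ₀)^2 * (Real.sin θ₁)^2 * h2
  calc ∑ g, (Complex.normSq ((Matrix.toEuclideanLin (Wone n hn θ₀ θ₁ θ₂) Φ - Φ) (e.symm (0, g))) +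
        Complex.normSq ((Matrix.toEuclideanLin (Wone n hn θ₀ θ₁ θ₂) Φ - Φ) (e.symm (1, g))))
      = ∑ g, (2 - 2 * Real.cos θ₀) *
          (Complex.normSq (Φ (e.symm (0, g))) + Complex.normSq (Φ (e.symm (1, g)))) := by
        apply Finset.sum_congr rfl
        intro g _
        rw [hsub, hsub, hmv, hmv]
        have := pair_id (Real.cos θ₀) (Real.sin θ₀ * Real.cos θ₁)
          (Real.sin θ₀ * Real.sin θ₁ * Real.cos θ₂) (Real.sin θ₀ * Real.sin θ₁ * Real.sin θ₂)
          htrig (Φ (e.symm (0, g))) (Φ (e.symm (1, g)))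
        simpa [Wmat, Matrix.cons_val_zero, Matrix.cons_val_one, Matrix.head_cons] using this
    _ = 2 - 2 * Real.cos θ₀ := by rw [← Finset.mul_sum, hΦsum, mul_one]

theorem variance_one_qubit_error (n : ℕ) (hn : 0 < n) (f : ℝ → ℝ)
    (hf : 4 * π * ∫ θ₀ in (0:ℝ)..π, f θ₀ * Real.sin θ₀ ^ 2 = 1)
    (Φ : EuclideanSpace ℂ (Fin n → Fin 2)) (hΦ : ‖Φ‖ = 1) :
    (∫ θ₀ in (0:ℝ)..π, ∫ θ₁ in (0:ℝ)..π, ∫ θ₂ in (0:ℝ)..(2 * π),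
        f θ₀ * ‖Matrix.toEuclideanLin (Wone n hn θ₀ θ₁ θ₂) Φ - Φ‖ ^ 2 *
          Real.sin θ₀ ^ 2 * Real.sin θ₁) =
      2 - 8 * π * ∫ θ₀ in (0:ℝ)..π, f θ₀ * Real.cos θ₀ * Real.sin θ₀ ^ 2 := by
  have hN : ∀ θ₀ θ₁ θ₂ : ℝ,
      ‖Matrix.toEuclideanLin (Wone n hn θ₀ θ₁ θ₂) Φ - Φ‖ ^ 2 = 2 - 2 * Real.cos θ₀ :=
    fun θ₀ θ₁ θ₂ => key_norm n hn θ₀ θ₁ θ₂ Φ hΦ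
  have hF : IntervalIntegrable (fun θ₀ => f θ₀ * Real.sin θ₀ ^ 2) MeasureTheory.volume 0 π := by
    by_contra h
    rw [intervalIntegral.integral_undef h] at hf
    norm_num [Real.pi_ne_zero] at hf
  have hG : IntervalIntegrable (fun θ₀ => f θ₀ * Real.cos θ₀ * Real.sin θ₀ ^ 2)
      MeasureTheory.volume 0 π := by
    have heq : (fun θ₀ => f θ₀ * Real.cos θ₀ * Real.sin θ₀ ^ 2) =
        fun θ₀ => (f θ₀ * Real.sin θ₀ ^ 2) * Real.cos θ₀ := by funext t; ring
    rw [heq]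
    exact hF.mul_continuousOn Real.continuous_cos.continuousOn
  have step : (∫ θ₀ in (0:ℝ)..π, ∫ θ₁ in (0:ℝ)..π, ∫ θ₂ in (0:ℝ)..(2 * π),
        f θ₀ * ‖Matrix.toEuclideanLin (Wone n hn θ₀ θ₁ θ₂) Φ - Φ‖ ^ 2 *
          Real.sin θ₀ ^ 2 * Real.sin θ₁) =
      ∫ θ₀ in (0:ℝ)..π, ((8 * π) * (f θ₀ * Real.sin θ₀ ^ 2)
        - (8 * π) * (f θ₀ * Real.cos θ₀ * Real.sin θ₀ ^ 2)) := by
    apply intervalIntegral.integral_congr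
    intro θ₀ _
    have h2 : ∀ θ₁ : ℝ, (∫ θ₂ in (0:ℝ)..(2 * π),
        f θ₀ * ‖Matrix.toEuclideanLin (Wone n hn θ₀ θ₁ θ₂) Φ - Φ‖ ^ 2 *
          Real.sin θ₀ ^ 2 * Real.sin θ₁) =
        ((2 * π) * (f θ₀ * (2 - 2 * Real.cos θ₀) * Real.sin θ₀ ^ 2)) * Real.sin θ₁ := by
      intro θ₁
      have : (∫ θ₂ in (0:ℝ)..(2 * π),
          f θ₀ * ‖Matrix.toEuclideanLin (Wone n hn θ₀ θ₁ θ₂) Φ - Φ‖ ^ 2 *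
            Real.sin θ₀ ^ 2 * Real.sin θ₁) =
          ∫ _θ₂ in (0:ℝ)..(2 * π),
            (f θ₀ * (2 - 2 * Real.cos θ₀) * Real.sin θ₀ ^ 2 * Real.sin θ₁) := by
        apply intervalIntegral.integral_congr
        intro t _
        simp only []; rw [hN]
      rw [this, intervalIntegral.integral_const, smul_eq_mul]
      ring
    simp only [h2]
    rw [intervalIntegral.integral_const_mul, integral_sin]
    simp only [Real.cos_pi, Real.cos_zero]
    ring
  rw [step, intervalIntegral.integral_sub (hF.const_mul _) (hG.const_mul _),
    intervalIntegral.integral_const_mul, intervalIntegral.integral_const_mul]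
  linear_combination 2 * hf
end

section
/- For a one-qubit error with the normal distribution with parameter σ, the variance of the disturbed state is V(Ψ) = 2 - 2σ. -/
open Real

lemma denom_pos {σ : ℝ} (h0 : 0 ≤ σ) (h1 : σ < 1) (θ : ℝ) :
    0 < 1 + σ ^ 2 - 2 * σ * Real.cos θ := by
  nlinarith [Real.neg_one_le_cos θ, Real.cos_le_one θ, sq_nonneg (1 - σ),
    sq_nonneg (σ - σ * Real.cos θ), sq_nonneg (1 - σ * Real.cos θ)]

lemma denom1_pos {σ : ℝ} (h0 : 0 ≤ σ) (h1 : σ < 1) (θ : ℝ) :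
    0 < 1 - σ * Real.cos θ := by
  nlinarith [Real.neg_one_le_cos θ, Real.cos_le_one θ]

lemma key_deriv {σ : ℝ} (h0 : 0 < σ) (h1 : σ < 1) (θ : ℝ) :
    HasDerivAt (fun t : ℝ =>
      σ * t / (2 * (1 - σ ^ 2)) +
      (1 + σ ^ 4) / (2 * σ ^ 3 * (1 - σ ^ 2)) *
        Real.arctan (σ * Real.sin t / (1 - σ * Real.cos t)) -
      Real.sin t * (1 + σ ^ 2 - σ * Real.cos t) /
        (2 * σ ^ 2 * (1 + σ ^ 2 - 2 * σ * Real.cos t)))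
      (Real.cos θ * Real.sin θ ^ 2 / (1 + σ ^ 2 - 2 * σ * Real.cos θ) ^ 2) θ := by
  have hd1 : (1 : ℝ) - σ * Real.cos θ ≠ 0 := ne_of_gt (denom1_pos h0.le h1 θ)
  have hD : (1 : ℝ) + σ ^ 2 - 2 * σ * Real.cos θ ≠ 0 := ne_of_gt (denom_pos h0.le h1 θ)
  have hs : σ ≠ 0 := ne_of_gt h0
  have hs2 : (1 : ℝ) - σ ^ 2 ≠ 0 := by nlinarith
  have hu : HasDerivAt (fun t : ℝ => σ * Real.sin t / (1 - σ * Real.cos t))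
      ((σ * Real.cos θ * (1 - σ * Real.cos θ) -
        σ * Real.sin θ * (σ * Real.sin θ)) / (1 - σ * Real.cos θ) ^ 2) θ := by
    have h1' : HasDerivAt (fun t : ℝ => σ * Real.sin t) (σ * Real.cos θ) θ :=
      (Real.hasDerivAt_sin θ).const_mul σ
    have h2' : HasDerivAt (fun t : ℝ => 1 - σ * Real.cos t) (σ * Real.sin θ) θ := by
      have := ((Real.hasDerivAt_cos θ).const_mul σ).const_sub (1 : ℝ)
      simpa using this
    exact h1'.div h2' hd1
  have harct := hu.arctan
  have hA : HasDerivAt (fun t : ℝ => σ * t / (2 * (1 - σ ^ 2)))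
      (σ / (2 * (1 - σ ^ 2))) θ := by
    simpa [mul_div_assoc] using
      ((hasDerivAt_id θ).const_mul σ).div_const (2 * (1 - σ ^ 2))
  have hB := harct.const_mul ((1 + σ ^ 4) / (2 * σ ^ 3 * (1 - σ ^ 2)))
  have hnum : HasDerivAt (fun t : ℝ => Real.sin t * (1 + σ ^ 2 - σ * Real.cos t))
      (Real.cos θ * (1 + σ ^ 2 - σ * Real.cos θ) +
        Real.sin θ * (σ * Real.sin θ)) θ := by
    have h1' := Real.hasDerivAt_sin θ
    have h2' : HasDerivAt (fun t : ℝ => 1 + σ ^ 2 - σ * Real.cos t) (σ * Real.sin θ) θ := by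
      have := ((Real.hasDerivAt_cos θ).const_mul σ).const_sub (1 + σ ^ 2)
      simpa using this
    exact h1'.mul h2'
  have hden : HasDerivAt (fun t : ℝ => 2 * σ ^ 2 * (1 + σ ^ 2 - 2 * σ * Real.cos t))
      (2 * σ ^ 2 * (2 * σ * Real.sin θ)) θ := by
    have h2' : HasDerivAt (fun t : ℝ => 1 + σ ^ 2 - 2 * σ * Real.cos t)
        (2 * σ * Real.sin θ) θ := by
      have := ((Real.hasDerivAt_cos θ).const_mul (2 * σ)).const_sub (1 + σ ^ 2)
      simpa [mul_assoc] using this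
    exact h2'.const_mul (2 * σ ^ 2)
  have hden' : 2 * σ ^ 2 * (1 + σ ^ 2 - 2 * σ * Real.cos θ) ≠ 0 := by
    exact mul_ne_zero (by positivity) hD
  have hC := hnum.div hden hden'
  have htot := (hA.add hB).sub hC
  refine htot.congr_deriv (Eq.symm ?_)
  have hu2 : (1 : ℝ) + (σ * Real.sin θ / (1 - σ * Real.cos θ)) ^ 2 ≠ 0 := by positivity
  have hsin : Real.sin θ ^ 2 = 1 - Real.cos θ ^ 2 := Real.sin_sq θ
  have hu2' : (1 : ℝ) + (σ * Real.sin θ / (1 - σ * Real.cos θ)) ^ 2 =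
      (1 + σ ^ 2 - 2 * σ * Real.cos θ) / (1 - σ * Real.cos θ) ^ 2 := by
    field_simp
    rw [hsin]; ring
  have hD2 : (1 : ℝ) + σ ^ 2 - Real.cos θ * σ * 2 ≠ 0 := by
    rw [show Real.cos θ * σ * 2 = 2 * σ * Real.cos θ by ring]; exact hD
  have hd2 : (1 : ℝ) - Real.cos θ * σ ≠ 0 := by rw [mul_comm]; exact hd1
  rw [hu2']
  field_simp
  rw [hsin]
  ring

lemma key_integral (σ : ℝ) (h0 : 0 ≤ σ) (h1 : σ < 1) :
    ∫ θ in (0:ℝ)..π, Real.cos θ * Real.sin θ ^ 2 / (1 + σ ^ 2 - 2 * σ * Real.cos θ) ^ 2 =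
      π * σ / (2 * (1 - σ ^ 2)) := by
  have hcont : Continuous fun θ : ℝ =>
      Real.cos θ * Real.sin θ ^ 2 / (1 + σ ^ 2 - 2 * σ * Real.cos θ) ^ 2 := by
    apply Continuous.div (by fun_prop) (by fun_prop)
    exact fun θ => pow_ne_zero 2 (ne_of_gt (denom_pos h0 h1 θ))
  rcases h0.eq_or_lt with h | h
  · subst h
    have : ∀ x : ℝ, HasDerivAt (fun t : ℝ => Real.sin t ^ 3 / 3)
        (Real.cos x * Real.sin x ^ 2 / (1 + (0:ℝ) ^ 2 - 2 * 0 * Real.cos x) ^ 2) x := by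
      intro x
      have h' := ((Real.hasDerivAt_sin x).pow 3).div_const 3
      refine h'.congr_deriv (Eq.symm ?_)
      norm_num; ring
    rw [intervalIntegral.integral_eq_sub_of_hasDerivAt (fun x _ => this x)
      (hcont.intervalIntegrable 0 π)]
    simp
  · rw [intervalIntegral.integral_eq_sub_of_hasDerivAt
      (fun x _ => key_deriv h h1 x) (hcont.intervalIntegrable 0 π)]
    simp [Real.sin_pi, Real.cos_pi, Real.arctan_zero]
    ring

theorem variance_normal_one_qubit (σ : ℝ) (hσ : σ ∈ Set.Ico (0:ℝ) 1) :
    2 - 8 * π * ∫ θ₀ in (0:ℝ)..π,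
        ((1 / (2 * π ^ 2)) * (1 - σ ^ 2) / (1 + σ ^ 2 - 2 * σ * Real.cos θ₀) ^ 2) *
          Real.cos θ₀ * Real.sin θ₀ ^ 2 = 2 - 2 * σ := by
  obtain ⟨h0, h1⟩ := hσ
  have hσ2 : (1:ℝ) - σ ^ 2 ≠ 0 := by nlinarith
  have hπ : π ≠ 0 := Real.pi_ne_zero
  have hcongr : ∀ θ₀ ∈ Set.uIcc (0:ℝ) π,
      ((1 / (2 * π ^ 2)) * (1 - σ ^ 2) / (1 + σ ^ 2 - 2 * σ * Real.cos θ₀) ^ 2) *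
        Real.cos θ₀ * Real.sin θ₀ ^ 2 =
      ((1 - σ ^ 2) / (2 * π ^ 2)) *
        (Real.cos θ₀ * Real.sin θ₀ ^ 2 / (1 + σ ^ 2 - 2 * σ * Real.cos θ₀) ^ 2) := by
    intro θ₀ _
    field_simp
  rw [intervalIntegral.integral_congr hcongr, intervalIntegral.integral_const_mul,
    key_integral σ h0 h1]
  field_simp
  ring
end
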